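/- Let Σ and Ψ be n×n positive semidefinite matrices with Σ ⪰ Ψ ⪰ 0 and Ψ⁺ ⪰ Σ⁺, and let Φ := (Σ^{1/2})ᵀ Ψ⁺ Σ^{1/2}. Then pdet(Σ) · pdet(Ψ⁺) = pdet(Φ), where pdet denotes the pseudo-determinant (the product of all nonzero eigenvalues). -/

import Mathlib

open Matrix

/-- `B` is the Moore–Penrose pseudoinverse of `A`. -/
def IsMoorePenroseInv {n : ℕ} (A B : Matrix (Fin n) (Fin n) ℝ) : Prop :=
  A * B * A = A ∧ B * A * B = B ∧ (A * B)ᵀ = A * B ∧ (B * A)ᵀ = B * A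

/-- Pseudo-determinant of a symmetric real matrix: the product of its nonzero eigenvalues. -/
noncomputable def pdet {n : ℕ} (A : Matrix (Fin n) (Fin n) ℝ) (hA : A.IsHermitian) : ℝ :=
  ∏ i ∈ Finset.univ.filter (fun i => hA.eigenvalues i ≠ 0), hA.eigenvalues i

section
open scoped ComplexOrder

/-- The positive semidefinite square root, as defined in Mathlib (Dec 2024), since removed. -/
noncomputable def Matrix.PosSemidef.sqrt {n 𝕜 : Type*} [Fintype n] [RCLike 𝕜] [DecidableEq n]
    {A : Matrix n n 𝕜} (hA : A.PosSemidef) : Matrix n n 𝕜 :=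
  hA.1.eigenvectorUnitary.1 * diagonal ((↑) ∘ (fun i => Real.sqrt (hA.1.eigenvalues i))) *
  (star hA.1.eigenvectorUnitary : Matrix n n 𝕜)

end

lemma Matrix.PosSemidef.posSemidef_sqrt {n : ℕ} {A : Matrix (Fin n) (Fin n) ℝ}
    (hA : A.PosSemidef) : hA.sqrt.PosSemidef := by
  unfold Matrix.PosSemidef.sqrt
  have hD : (diagonal ((RCLike.ofReal : ℝ → ℝ) ∘ (fun i => Real.sqrt (hA.1.eigenvalues i))) :
      Matrix (Fin n) (Fin n) ℝ).PosSemidef :=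
    PosSemidef.diagonal (fun i => by simp [Real.sqrt_nonneg])
  have := hD.mul_mul_conjTranspose_same (hA.1.eigenvectorUnitary : Matrix (Fin n) (Fin n) ℝ)
  simpa [Matrix.star_eq_conjTranspose] using this

lemma Matrix.PosSemidef.sqrt_mul_self {n : ℕ} {A : Matrix (Fin n) (Fin n) ℝ}
    (hA : A.PosSemidef) : hA.sqrt * hA.sqrt = A := by
  unfold Matrix.PosSemidef.sqrt
  have hUU' : star (hA.1.eigenvectorUnitary : Matrix (Fin n) (Fin n) ℝ) *
      (hA.1.eigenvectorUnitary : Matrix (Fin n) (Fin n) ℝ) = 1 :=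
    Matrix.mem_unitaryGroup_iff'.mp hA.1.eigenvectorUnitary.2
  have hspec : A = (hA.1.eigenvectorUnitary : Matrix (Fin n) (Fin n) ℝ) *
      diagonal hA.1.eigenvalues * star (hA.1.eigenvectorUnitary : Matrix (Fin n) (Fin n) ℝ) := by
    have := hA.1.spectral_theorem
    simpa [RCLike.ofReal_real_eq_id] using this
  have hDD : (diagonal ((RCLike.ofReal : ℝ → ℝ) ∘ (fun i => Real.sqrt (hA.1.eigenvalues i))) :
      Matrix (Fin n) (Fin n) ℝ) * diagonal ((RCLike.ofReal : ℝ → ℝ) ∘ (fun i => Real.sqrt (hA.1.eigenvalues i)))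
      = diagonal hA.1.eigenvalues := by
    rw [diagonal_mul_diagonal]
    congr 1
    funext i
    simp [Real.mul_self_sqrt (hA.eigenvalues_nonneg i)]
  simp only [Matrix.mul_assoc]
  rw [← Matrix.mul_assoc (star _) _ (_ * star _), hUU', Matrix.one_mul,
    ← Matrix.mul_assoc (diagonal _) (diagonal _), hDD, ← Matrix.mul_assoc]
  exact hspec.symm

lemma pdet_congr {n : ℕ} {A B : Matrix (Fin n) (Fin n) ℝ} (h : A = B)
    (hA : A.IsHermitian) (hB : B.IsHermitian) : pdet A hA = pdet B hB := by
  subst h; rfl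

lemma ker_mul_eq_zero {n : ℕ} {A C B : Matrix (Fin n) (Fin n) ℝ}
    (h : ∀ x, A *ᵥ x = 0 → C *ᵥ x = 0) (hAB : A * B = 0) : C * B = 0 := by
  ext i j
  have hx : A *ᵥ (fun k => B k j) = 0 := by
    funext i'
    have h2 := (Matrix.ext_iff.2 hAB) i' j
    simpa [Matrix.mul_apply, Matrix.mulVec, dotProduct] using h2
  have h3 := congrFun (h _ hx) i
  simpa [Matrix.mul_apply, Matrix.mulVec, dotProduct] using h3

lemma mp_transpose_eq {n : ℕ} {A B : Matrix (Fin n) (Fin n) ℝ} (hA : Aᵀ = A)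
    (h : IsMoorePenroseInv A B) : Bᵀ = B := by
  obtain ⟨hABA, hBAB, hABs, hBAs⟩ := h
  have hAC : A * Bᵀ = B * A := by
    calc A * Bᵀ = Aᵀ * Bᵀ := by rw [hA]
      _ = (B * A)ᵀ := (transpose_mul B A).symm
      _ = B * A := hBAs
  have hCA : Bᵀ * A = A * B := by
    calc Bᵀ * A = Bᵀ * Aᵀ := by rw [hA]
      _ = (A * B)ᵀ := (transpose_mul A B).symm
      _ = A * B := hABs
  have hACA : A * (Bᵀ * A) = A := by
    have h1 := congrArg Matrix.transpose hABA
    rwa [transpose_mul, transpose_mul, hA] at h1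
  have hCAC : Bᵀ * A * Bᵀ = Bᵀ := by
    have h1 := congrArg Matrix.transpose hBAB
    rwa [transpose_mul, transpose_mul, hA, ← Matrix.mul_assoc] at h1
  have hYs : (A * Bᵀ)ᵀ = A * Bᵀ := by rw [hAC, hBAs, ← hAC]
  have hXY : A * B = (A * Bᵀ) * (A * B) := by
    calc A * B = (A * (Bᵀ * A)) * B := by rw [hACA]
      _ = (A * Bᵀ) * (A * B) := by
          rw [← Matrix.mul_assoc A Bᵀ A, Matrix.mul_assoc (A * Bᵀ) A B]
  have hYX : A * Bᵀ = (A * B) * (A * Bᵀ) := by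
    calc A * Bᵀ = (A * B * A) * Bᵀ := by rw [hABA]
      _ = (A * B) * (A * Bᵀ) := Matrix.mul_assoc _ _ _
  have hXeqY : A * B = A * Bᵀ := by
    calc A * B = (A * B)ᵀ := hABs.symm
      _ = ((A * Bᵀ) * (A * B))ᵀ := by rw [← hXY]
      _ = (A * B)ᵀ * (A * Bᵀ)ᵀ := transpose_mul _ _
      _ = (A * B) * (A * Bᵀ) := by rw [hABs, hYs]
      _ = A * Bᵀ := hYX.symm
  have hcomm : A * B = B * A := by rw [hXeqY, hAC]
  calc Bᵀ = Bᵀ * A * Bᵀ := hCAC.symm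
    _ = (A * B) * Bᵀ := by rw [hCA]
    _ = (B * A) * Bᵀ := by rw [← hcomm]
    _ = B * (A * Bᵀ) := Matrix.mul_assoc _ _ _
    _ = B * (A * B) := by rw [← hXeqY]
    _ = B * A * B := (Matrix.mul_assoc _ _ _).symm
    _ = B := hBAB

lemma pdet_eq_det {n : ℕ} (M : Matrix (Fin n) (Fin n) ℝ) (hM : M.IsHermitian)
    (P : Matrix (Fin n) (Fin n) ℝ) (hPt : Pᵀ = P) (hMP : M * P = M)
    (hker : ∀ x, M *ᵥ x = 0 → P *ᵥ x = 0) :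
    pdet M hM = (M + 1 - P).det := by
  set U : Matrix (Fin n) (Fin n) ℝ := (hM.eigenvectorUnitary : Matrix (Fin n) (Fin n) ℝ) with hU
  set d : Fin n → ℝ := hM.eigenvalues with hd
  have hspec : M = U * diagonal d * star U := by
    have := hM.spectral_theorem
    simpa [RCLike.ofReal_real_eq_id] using this
  have hUU : U * star U = 1 := Matrix.mem_unitaryGroup_iff.mp hM.eigenvectorUnitary.2
  have hUU' : star U * U = 1 := Matrix.mem_unitaryGroup_iff'.mp hM.eigenvectorUnitary.2
  set d' : Fin n → ℝ := fun i => if d i = 0 then 0 else 1 with hd'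
  set P0 : Matrix (Fin n) (Fin n) ℝ := U * diagonal d' * star U with hP0
  have conjmul : ∀ X Y : Matrix (Fin n) (Fin n) ℝ,
      (U * X * star U) * (U * Y * star U) = U * (X * Y) * star U := by
    intro X Y
    simp only [Matrix.mul_assoc]
    rw [show star U * (U * (Y * star U)) = Y * star U from by
      rw [← Matrix.mul_assoc, hUU', Matrix.one_mul]]
  have hdd' : diagonal d * diagonal d' = diagonal d := by
    have e : (fun i => d i * d' i) = d := by
      funext i
      by_cases h : d i = 0 <;> simp [hd', h]
    rw [diagonal_mul_diagonal, e]
  have hMP0 : M * P0 = M := by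
    rw [hspec, hP0, conjmul, hdd']
  have hstarU : star U = Uᵀ := by
    rw [Matrix.star_eq_conjTranspose, conjTranspose_eq_transpose_of_trivial]
  have hP0t : P0ᵀ = P0 := by
    rw [hP0, hstarU]
    simp [transpose_mul, Matrix.mul_assoc, diagonal_transpose]
  have hkerP0 : ∀ x, M *ᵥ x = 0 → P0 *ᵥ x = 0 := by
    intro x hx
    have hy : diagonal d *ᵥ (star U *ᵥ x) = 0 := by
      have e : star U * M = diagonal d * star U := by
        rw [hspec]
        simp only [Matrix.mul_assoc]
        rw [← Matrix.mul_assoc, hUU', Matrix.one_mul]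
      calc diagonal d *ᵥ (star U *ᵥ x) = (diagonal d * star U) *ᵥ x := by
            rw [mulVec_mulVec]
        _ = (star U * M) *ᵥ x := by rw [e]
        _ = star U *ᵥ (M *ᵥ x) := by rw [mulVec_mulVec]
        _ = 0 := by rw [hx, mulVec_zero]
    have hy' : diagonal d' *ᵥ (star U *ᵥ x) = 0 := by
      funext i
      have h1 := congrFun hy i
      simp only [mulVec_diagonal, Pi.zero_apply] at h1 ⊢
      rcases mul_eq_zero.mp h1 with h | h
      · simp [hd', h]
      · simp [h]
    rw [hP0, ← mulVec_mulVec, ← mulVec_mulVec, hy', mulVec_zero]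
  have hM1P0 : M * (1 - P0) = 0 := by rw [mul_sub, mul_one, hMP0, sub_self]
  have hM1P : M * (1 - P) = 0 := by rw [mul_sub, mul_one, hMP, sub_self]
  have a1 : P * (1 - P0) = 0 := ker_mul_eq_zero hker hM1P0
  have a2 : P0 * (1 - P) = 0 := ker_mul_eq_zero hkerP0 hM1P
  rw [mul_sub, mul_one, sub_eq_zero] at a1 a2
  have hPP0 : P = P0 := by
    have h1 : P = P0 * P := by
      calc P = Pᵀ := hPt.symm
        _ = (P * P0)ᵀ := by rw [← a1]
        _ = P0ᵀ * Pᵀ := transpose_mul _ _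
        _ = P0 * P := by rw [hP0t, hPt]
    rw [h1, ← a2]
  have hsum : M + 1 - P = U * (diagonal d + 1 - diagonal d') * star U := by
    have expand : U * (diagonal d + 1 - diagonal d') * star U
        = U * diagonal d * star U + U * star U - U * diagonal d' * star U := by
      noncomm_ring
    rw [expand, hUU, hPP0, hspec, hP0]
  have hDdet : (diagonal d + 1 - diagonal d').det = ∏ i, (if d i ≠ 0 then d i else 1) := by
    have e : diagonal d + 1 - diagonal d' = diagonal (fun i => d i + 1 - d' i) := by
      rw [← Matrix.diagonal_one, diagonal_add, diagonal_sub]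
    rw [e, det_diagonal]
    refine Finset.prod_congr rfl fun i _ => ?_
    by_cases h : d i = 0 <;> simp [hd', h]
  have hpdet : pdet M hM = ∏ i, (if d i ≠ 0 then d i else 1) := by
    rw [pdet, Finset.prod_filter]
  rw [hpdet, hsum, det_mul, det_mul, hDdet, mul_right_comm, mul_comm U.det,
    show (star U).det * U.det = 1 from by rw [← det_mul, hUU', det_one], one_mul]


/-- If `Σ ⪰ Ψ ⪰ 0`, `Ψ⁺ ⪰ Σ⁺` and `Φ = (Σ^{1/2})ᵀ Ψ⁺ Σ^{1/2}`, then
`pdet(Σ) · pdet(Ψ⁺) = pdet(Φ)`. -/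
theorem stmt_3 {n : ℕ} (Sig Psi Sigp Psip : Matrix (Fin n) (Fin n) ℝ)
    (hSig : Sig.PosSemidef) (hPsi : Psi.PosSemidef)
    (hSigp : IsMoorePenroseInv Sig Sigp) (hPsip : IsMoorePenroseInv Psi Psip)
    (hge : (Sig - Psi).PosSemidef) (hgep : (Psip - Sigp).PosSemidef)
    (hPsipH : Psip.IsHermitian)
    (hPhiH : ((hSig.sqrt)ᵀ * Psip * hSig.sqrt).IsHermitian) :
    pdet Sig hSig.isHermitian * pdet Psip hPsipH
      = pdet ((hSig.sqrt)ᵀ * Psip * hSig.sqrt) hPhiH := by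
  have hSigT : Sigᵀ = Sig := by
    rw [← conjTranspose_eq_transpose_of_trivial]; exact hSig.isHermitian
  have hPsiT : Psiᵀ = Psi := by
    rw [← conjTranspose_eq_transpose_of_trivial]; exact hPsi.isHermitian
  have hPsipT : Psipᵀ = Psip := by
    rw [← conjTranspose_eq_transpose_of_trivial]; exact hPsipH
  have hSigpT : Sigpᵀ = Sigp := mp_transpose_eq hSigT hSigp
  set S : Matrix (Fin n) (Fin n) ℝ := hSig.sqrt with hSdef
  have hSpsd : S.PosSemidef := hSig.posSemidef_sqrt
  have hST : Sᵀ = S := by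
    rw [← conjTranspose_eq_transpose_of_trivial]; exact hSpsd.1
  have hSmul : S * S = Sig := hSig.sqrt_mul_self
  -- psd of the pseudoinverses
  have hSigpPsd : Sigp.PosSemidef := by
    have h2 := hSig.conjTranspose_mul_mul_same Sigp
    rwa [conjTranspose_eq_transpose_of_trivial, hSigpT, hSigp.2.1] at h2
  have hPsipPsd : Psip.PosSemidef := by
    have h2 := hPsi.conjTranspose_mul_mul_same Psip
    rwa [conjTranspose_eq_transpose_of_trivial, hPsipT, hPsip.2.1] at h2
  -- kernel inclusions
  have kSigPsi : ∀ x, Sig *ᵥ x = 0 → Psi *ᵥ x = 0 := by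
    intro x hx
    have h1 := hge.dotProduct_mulVec_nonneg x
    have h2 := hPsi.dotProduct_mulVec_nonneg x
    rw [sub_mulVec, dotProduct_sub, hx, dotProduct_zero, zero_sub] at h1
    have h3 : star x ⬝ᵥ Psi *ᵥ x = 0 := by linarith
    exact (hPsi.dotProduct_mulVec_zero_iff x).mp h3
  have kPsipSigp : ∀ x, Psip *ᵥ x = 0 → Sigp *ᵥ x = 0 := by
    intro x hx
    have h1 := hgep.dotProduct_mulVec_nonneg x
    have h2 := hSigpPsd.dotProduct_mulVec_nonneg x
    rw [sub_mulVec, dotProduct_sub, hx, dotProduct_zero, zero_sub] at h1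
    have h3 : star x ⬝ᵥ Sigp *ᵥ x = 0 := by linarith
    exact (hSigpPsd.dotProduct_mulVec_zero_iff x).mp h3
  have kPsiPsip : ∀ x, Psi *ᵥ x = 0 → Psip *ᵥ x = 0 := by
    intro x hx
    have key : Psip = Psip * Psipᵀ * Psi := by
      calc Psip = Psip * Psi * Psip := hPsip.2.1.symm
        _ = Psip * (Psi * Psip) := Matrix.mul_assoc _ _ _
        _ = Psip * (Psi * Psip)ᵀ := by rw [hPsip.2.2.1]
        _ = Psip * (Psipᵀ * Psiᵀ) := by rw [transpose_mul]
        _ = Psip * (Psipᵀ * Psi) := by rw [hPsiT]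
        _ = Psip * Psipᵀ * Psi := (Matrix.mul_assoc _ _ _).symm
    rw [key, ← mulVec_mulVec, hx, mulVec_zero]
  have kSigSigp : ∀ x, Sig *ᵥ x = 0 → Sigp *ᵥ x = 0 := by
    intro x hx
    have key : Sigp = Sigp * Sigpᵀ * Sig := by
      calc Sigp = Sigp * Sig * Sigp := hSigp.2.1.symm
        _ = Sigp * (Sig * Sigp) := Matrix.mul_assoc _ _ _
        _ = Sigp * (Sig * Sigp)ᵀ := by rw [hSigp.2.2.1]
        _ = Sigp * (Sigpᵀ * Sigᵀ) := by rw [transpose_mul]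
        _ = Sigp * (Sigpᵀ * Sig) := by rw [hSigT]
        _ = Sigp * Sigpᵀ * Sig := (Matrix.mul_assoc _ _ _).symm
    rw [key, ← mulVec_mulVec, hx, mulVec_zero]
  have kSigpSig : ∀ x, Sigp *ᵥ x = 0 → Sig *ᵥ x = 0 := by
    intro x hx
    have key : Sig = Sig * Sig * Sigp := by
      calc Sig = Sig * Sigp * Sig := hSigp.1.symm
        _ = Sig * (Sigp * Sig) := Matrix.mul_assoc _ _ _
        _ = Sig * (Sigp * Sig)ᵀ := by rw [hSigp.2.2.2]
        _ = Sig * (Sigᵀ * Sigpᵀ) := by rw [transpose_mul]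
        _ = Sig * (Sig * Sigp) := by rw [hSigT, hSigpT]
        _ = Sig * Sig * Sigp := (Matrix.mul_assoc _ _ _).symm
    rw [key, ← mulVec_mulVec, hx, mulVec_zero]
  have kSigS : ∀ x, Sig *ᵥ x = 0 → S *ᵥ x = 0 := by
    intro x hx
    have h0 : x ⬝ᵥ Sig *ᵥ x = 0 := by rw [hx, dotProduct_zero]
    have h1 : (S *ᵥ x) ⬝ᵥ (S *ᵥ x) = 0 := by
      calc (S *ᵥ x) ⬝ᵥ (S *ᵥ x) = (Sᵀ *ᵥ x) ⬝ᵥ (S *ᵥ x) := by rw [hST]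
        _ = (x ᵥ* S) ⬝ᵥ (S *ᵥ x) := by rw [mulVec_transpose]
        _ = x ⬝ᵥ (S *ᵥ (S *ᵥ x)) := (dotProduct_mulVec _ _ _).symm
        _ = x ⬝ᵥ ((S * S) *ᵥ x) := by rw [mulVec_mulVec]
        _ = x ⬝ᵥ Sig *ᵥ x := by rw [hSmul]
        _ = 0 := h0
    exact dotProduct_self_eq_zero.mp h1
  -- projection P
  set P : Matrix (Fin n) (Fin n) ℝ := Sig * Sigp with hPdef
  have hPt : Pᵀ = P := hSigp.2.2.1
  have hPSig : P * Sig = Sig := hSigp.1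
  have hSigP : Sig * P = Sig := by
    calc Sig * P = Sigᵀ * Pᵀ := by rw [hSigT, hPt]
      _ = (P * Sig)ᵀ := (transpose_mul P Sig).symm
      _ = Sigᵀ := by rw [hPSig]
      _ = Sig := hSigT
  have hSig1P : Sig * (1 - P) = 0 := by rw [mul_sub, mul_one, hSigP, sub_self]
  have kSigP : ∀ x, Sig *ᵥ x = 0 → P *ᵥ x = 0 := by
    intro x hx
    rw [hPdef, ← mulVec_mulVec, kSigSigp x hx, mulVec_zero]
  have kSigPsip : ∀ x, Sig *ᵥ x = 0 → Psip *ᵥ x = 0 :=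
    fun x hx => kPsiPsip x (kSigPsi x hx)
  have kPsipP : ∀ x, Psip *ᵥ x = 0 → P *ᵥ x = 0 :=
    fun x hx => kSigP x (kSigpSig x (kPsipSigp x hx))
  have hSP : S * P = S := by
    have h0 : S * (1 - P) = 0 := ker_mul_eq_zero kSigS hSig1P
    rw [mul_sub, mul_one, sub_eq_zero] at h0
    exact h0.symm
  have hPS : P * S = S := by
    calc P * S = Pᵀ * Sᵀ := by rw [hPt, hST]
      _ = (S * P)ᵀ := (transpose_mul S P).symm
      _ = Sᵀ := by rw [hSP]
      _ = S := hST
  have hPsipP : Psip * P = Psip := by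
    have h0 : Psip * (1 - P) = 0 := ker_mul_eq_zero kSigPsip hSig1P
    rw [mul_sub, mul_one, sub_eq_zero] at h0
    exact h0.symm
  have hPPsip : P * Psip = Psip := by
    calc P * Psip = Pᵀ * Psipᵀ := by rw [hPt, hPsipT]
      _ = (Psip * P)ᵀ := (transpose_mul Psip P).symm
      _ = Psipᵀ := by rw [hPsipP]
      _ = Psip := hPsipT
  have hPP : P * P = P := by
    rw [hPdef, ← Matrix.mul_assoc, hSigp.1]
  -- Phi
  have hPhiPsd : (S * Psip * S).PosSemidef := by
    have h2 := hPsipPsd.conjTranspose_mul_mul_same S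
    rwa [conjTranspose_eq_transpose_of_trivial, hST] at h2
  have kPhiP : ∀ x, (S * Psip * S) *ᵥ x = 0 → P *ᵥ x = 0 := by
    intro x hx
    have h1 : (S *ᵥ x) ⬝ᵥ Psip *ᵥ (S *ᵥ x) = 0 := by
      calc (S *ᵥ x) ⬝ᵥ Psip *ᵥ (S *ᵥ x)
          = (Sᵀ *ᵥ x) ⬝ᵥ Psip *ᵥ (S *ᵥ x) := by rw [hST]
        _ = (x ᵥ* S) ⬝ᵥ Psip *ᵥ (S *ᵥ x) := by rw [mulVec_transpose]
        _ = x ⬝ᵥ (S *ᵥ (Psip *ᵥ (S *ᵥ x))) := (dotProduct_mulVec _ _ _).symm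
        _ = x ⬝ᵥ ((S * Psip * S) *ᵥ x) := by rw [mulVec_mulVec, mulVec_mulVec]
        _ = 0 := by rw [hx, dotProduct_zero]
    have h2 : Psip *ᵥ (S *ᵥ x) = 0 := (hPsipPsd.dotProduct_mulVec_zero_iff _).mp h1
    have h3 : Sig *ᵥ (S *ᵥ x) = 0 := kSigpSig _ (kPsipSigp _ h2)
    have h4 : S *ᵥ (S *ᵥ x) = 0 := kSigS _ h3
    have h5 : Sig *ᵥ x = 0 := by rw [← hSmul, ← mulVec_mulVec]; exact h4
    exact kSigP x h5
  have hPhiP : (S * Psip * S) * P = S * Psip * S := by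
    rw [Matrix.mul_assoc (S * Psip) S P, hSP]
  -- factorization identities
  have hSpP : S * Psip * P = S * Psip := by
    rw [Matrix.mul_assoc, hPsipP]
  have e1 : (S + 1 - P) * (Psip + 1 - P) = S * Psip + 1 - P := by
    simp only [sub_mul, add_mul, mul_sub, mul_add, mul_one, one_mul, hSP, hPPsip, hPP]
    abel
  have e2 : (S * Psip + 1 - P) * (S + 1 - P) = S * Psip * S + 1 - P := by
    simp only [sub_mul, add_mul, mul_sub, mul_add, mul_one, one_mul, hSpP, hPS, hPP]
    abel
  have e3 : (S + 1 - P) * (S + 1 - P) = Sig + 1 - P := by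
    simp only [sub_mul, add_mul, mul_sub, mul_add, mul_one, one_mul, hSP, hPS, hPP, hSmul]
    abel
  -- pdet computations
  have dSig : pdet Sig hSig.isHermitian = (Sig + 1 - P).det :=
    pdet_eq_det Sig hSig.isHermitian P hPt hSigP kSigP
  have dPsip : pdet Psip hPsipH = (Psip + 1 - P).det :=
    pdet_eq_det Psip hPsipH P hPt hPsipP kPsipP
  have dPhi : pdet (S * Psip * S) hPhiPsd.1 = (S * Psip * S + 1 - P).det :=
    pdet_eq_det _ hPhiPsd.1 P hPt hPhiP kPhiP
  have hcongr : pdet ((hSig.sqrt)ᵀ * Psip * hSig.sqrt) hPhiH = pdet (S * Psip * S) hPhiPsd.1 :=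
    pdet_congr (by rw [← hSdef, hST]) _ _
  rw [hcongr, dSig, dPsip, dPhi, ← e2, ← e1, ← e3]
  rw [det_mul, det_mul, det_mul]
  ring
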